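/- Let A, B, C be a triangle, A₁ the point strictly between B and C with ∠BAA₁ = ∠A₁AC, B₁ the point strictly between A and C with ∠ABB₁ = ∠B₁BC, and J a point lying on both segment AA₁ and segment BB₁. If dist A C = dist B C, then dist J A₁ = dist J B₁. -/

import Mathlib

open EuclideanGeometry Real

namespace Stmt7Aux

open AffineSubspace

variable {V P : Type*} [NormedAddCommGroup V] [InnerProductSpace ℝ V] [MetricSpace P]
  [NormedAddTorsor V P]

lemma pair_le {x y : P} {s : AffineSubspace ℝ P} (hx : x ∈ s) (hy : y ∈ s) :
    line[ℝ, x, y] ≤ s :=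
  affineSpan_le.2 (Set.insert_subset_iff.2 ⟨hx, Set.singleton_subset_iff.2 hy⟩)

lemma orthoProj_perpBisector (A B : P) [Nonempty (perpBisector A B)]
    [Submodule.HasOrthogonalProjection (perpBisector A B).direction] :
    (EuclideanGeometry.orthogonalProjection (perpBisector A B) A : P) = midpoint ℝ A B := by
  have hm : midpoint ℝ A B ∈ ((perpBisector A B : Set P) ∩
      (AffineSubspace.mk' A (perpBisector A B).directionᗮ : Set P)) := by
    refine ⟨midpoint_mem_perpBisector A B, ?_⟩
    rw [AffineSubspace.mem_coe, AffineSubspace.mem_mk', direction_perpBisector,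
      Submodule.orthogonal_orthogonal, midpoint_vsub_left]
    exact Submodule.smul_mem _ _ (Submodule.mem_span_singleton_self _)
  rw [EuclideanGeometry.inter_eq_singleton_orthogonalProjection A] at hm
  exact (Set.mem_singleton_iff.1 hm).symm

lemma reflection_perpBisector_left (A B : P) [Nonempty (perpBisector A B)]
    [Submodule.HasOrthogonalProjection (perpBisector A B).direction] :
    EuclideanGeometry.reflection (perpBisector A B) A = B := by
  rw [EuclideanGeometry.reflection_apply', orthoProj_perpBisector, midpoint_vsub_left,
    ← right_vsub_midpoint, vsub_vadd]

section Oriented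

variable [Fact (Module.finrank ℝ V = 2)] [Module.Oriented ℝ V (Fin 2)]

lemma angle_eq_of_oangle_eq_neg {p₁ p₂ p₃ q₁ q₂ q₃ : P} (h1 : p₁ ≠ p₂) (h3 : p₃ ≠ p₂)
    (h4 : q₁ ≠ q₂) (h6 : q₃ ≠ q₂) (ho : ∡ p₁ p₂ p₃ = -∡ q₁ q₂ q₃) :
    ∠ p₁ p₂ p₃ = ∠ q₁ q₂ q₃ := by
  have hc : Real.cos (∠ p₁ p₂ p₃) = Real.cos (∠ q₁ q₂ q₃) := by
    rw [← cos_oangle_eq_cos_angle h1 h3, ← cos_oangle_eq_cos_angle h4 h6, ho,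
      Real.Angle.cos_neg]
  exact Real.injOn_cos ⟨angle_nonneg _ _ _, angle_le_pi _ _ _⟩
    ⟨angle_nonneg _ _ _, angle_le_pi _ _ _⟩ hc

/-- If `X` lies strictly between `B` and `C` and `AX` bisects the angle at `A`, then the
oriented angle `∡ B A X` is half of `∡ B A C`, with the same sign. -/
lemma half_oangle {A B C X : P} (hN : ¬ Collinear ℝ ({A, B, C} : Set P))
    (hX : Sbtw ℝ B X C) (hX' : ∠ B A X = ∠ X A C) :
    (2 : ℕ) • ∡ B A X = ∡ B A C ∧ (∡ B A X).sign = (∡ B A C).sign := by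
  have hBA : B ≠ A := by
    intro hh; apply hN; rw [← hh]
    exact (collinear_pair ℝ B C).subset (by intro x hx; simp at hx ⊢; tauto)
  have hCA : C ≠ A := by
    intro hh; apply hN; rw [← hh]
    exact (collinear_pair ℝ B C).subset (by intro x hx; simp at hx ⊢; tauto)
  have hXA : X ≠ A := by
    intro hh
    apply hN
    have := hX.wbtw.collinear
    rw [hh] at this
    rwa [Set.insert_comm] at this
  have hsgn : (∡ B A X).sign = (∡ X A C).sign := hX.oangle_sign_eq A
  have hoeq : ∡ B A X = ∡ X A C := oangle_eq_of_angle_eq_of_sign_eq hX' hsgn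
  have hadd : ∡ B A X + ∡ X A C = ∡ B A C := oangle_add hBA hXA hCA
  refine ⟨?_, hX.oangle_sign_eq_left A⟩
  rw [two_nsmul]
  nth_rewrite 2 [hoeq]
  exact hadd

end Oriented

end Stmt7Aux

open Stmt7Aux AffineSubspace

theorem stmt_7 (A B C A₁ B₁ J : EuclideanSpace ℝ (Fin 2))
    (hABC : ¬ Collinear ℝ ({A, B, C} : Set (EuclideanSpace ℝ (Fin 2))))
    (hA₁ : Sbtw ℝ B A₁ C) (hA₁' : ∠ B A A₁ = ∠ A₁ A C)
    (hB₁ : Sbtw ℝ A B₁ C) (hB₁' : ∠ A B B₁ = ∠ B₁ B C)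
    (hJA : J ∈ segment ℝ A A₁) (hJB : J ∈ segment ℝ B B₁)
    (h : dist A C = dist B C) :
    dist J A₁ = dist J B₁ := by
  haveI : Fact (Module.finrank ℝ (EuclideanSpace ℝ (Fin 2)) = 2) :=
    ⟨finrank_euclideanSpace_fin⟩
  haveI : Module.Oriented ℝ (EuclideanSpace ℝ (Fin 2)) (Fin 2) :=
    ⟨Module.Basis.orientation (Module.finBasisOfFinrankEq ℝ _ finrank_euclideanSpace_fin)⟩
  have hABC' : ¬ Collinear ℝ ({B, A, C} : Set (EuclideanSpace ℝ (Fin 2))) := by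
    intro hc; exact hABC (by rwa [Set.insert_comm] at hc)
  -- basic ne facts
  have hBA : B ≠ A := by
    intro hh; apply hABC; rw [hh]
    exact (collinear_pair ℝ A C).subset (by intro x hx; simp at hx ⊢; tauto)
  have hAB : A ≠ B := hBA.symm
  have hA₁B : A₁ ≠ B := hA₁.ne_left
  have hB₁A : B₁ ≠ A := hB₁.ne_left
  have hA₁A : A₁ ≠ A := by
    intro hh
    apply hABC
    have := hA₁.wbtw.collinear
    rw [hh] at this
    rwa [Set.insert_comm] at this
  have hB₁B : B₁ ≠ B := by
    intro hh
    apply hABC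
    have := hB₁.wbtw.collinear
    rwa [hh] at this
  have hBnot : B ∉ line[ℝ, A, C] := fun hm =>
    hABC (collinear_triple_of_mem_affineSpan_pair (left_mem_affineSpan_pair ℝ A C) hm
      (right_mem_affineSpan_pair ℝ A C))
  have hAnot : A ∉ line[ℝ, B, C] := fun hm =>
    hABC (collinear_triple_of_mem_affineSpan_pair hm (left_mem_affineSpan_pair ℝ B C)
      (right_mem_affineSpan_pair ℝ B C))
  -- signs are nonzero
  have hs0 : (∡ B A C).sign ≠ 0 := by
    rw [Ne, oangle_sign_eq_zero_iff_collinear]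
    exact hABC'
  have hs0' : (∡ A B C).sign ≠ 0 := by
    rw [Ne, oangle_sign_eq_zero_iff_collinear]
    exact hABC
  -- half-angle facts
  obtain ⟨h2A, hsgA⟩ := half_oangle hABC hA₁ hA₁'
  obtain ⟨h2B, hsgB⟩ := half_oangle hABC' hB₁ hB₁'
  -- isosceles: base angles are equal
  have pons : ∠ C A B = ∠ C B A :=
    angle_eq_angle_of_dist_eq (by rw [dist_comm C A, dist_comm C B]; exact h)
  have hU : ∠ A B C = ∠ C A B := by rw [angle_comm A B C]; exact pons.symm
  have hsU : (∡ A B C).sign = (∡ C A B).sign := by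
    rw [← oangle_swap₁₂_sign B A C, ← oangle_swap₁₃_sign B A C]
  have hts : ∡ A B C = -∡ B A C :=
    (oangle_eq_of_angle_eq_of_sign_eq hU hsU).trans (oangle_rev B A C)
  have hsACBneg : (∡ A B C).sign = -(∡ B A C).sign := by
    rw [← oangle_swap₁₂_sign B A C]
  -- the two half angles are opposite oriented angles
  have h2eq : (2 : ℕ) • ∡ A B B₁ = (2 : ℕ) • (-∡ B A A₁) := by
    rw [h2B, hts, ← h2A, neg_nsmul]
  have hyx : ∡ A B B₁ = -∡ B A A₁ := by
    rcases Real.Angle.two_nsmul_eq_iff.1 h2eq with h' | h'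
    · exact h'
    · exfalso
      have hsgn2 : (∡ A B B₁).sign = (∡ B A A₁).sign := by
        rw [h', Real.Angle.sign_add_pi, Real.Angle.sign_neg, neg_neg]
      rw [hsgB, hsACBneg, hsgA] at hsgn2
      rcases hsc : (∡ B A C).sign with _ | _ | _ <;> rw [hsc] at hsgn2 <;> simp_all
  have hhalf : ∠ A B B₁ = ∠ B A A₁ :=
    angle_eq_of_oangle_eq_neg hAB hB₁B hBA hA₁A hyx
  -- J is not A and not B
  have hWJA : Wbtw ℝ A J A₁ := mem_segment_iff_wbtw.1 hJA
  have hWJB : Wbtw ℝ B J B₁ := mem_segment_iff_wbtw.1 hJB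
  have hJA' : J ≠ A := by
    intro hh
    rw [hh] at hWJB
    have hc : Collinear ℝ ({B, A, B₁} : Set (EuclideanSpace ℝ (Fin 2))) := hWJB.collinear
    have hBmem : B ∈ line[ℝ, A, B₁] :=
      hc.mem_affineSpan_of_mem_of_ne (by simp) (by simp) (by simp) hB₁A.symm
    exact hBnot (pair_le (left_mem_affineSpan_pair ℝ A C) hB₁.wbtw.mem_affineSpan hBmem)
  have hJB' : J ≠ B := by
    intro hh
    rw [hh] at hWJA
    have hc : Collinear ℝ ({A, B, A₁} : Set (EuclideanSpace ℝ (Fin 2))) := hWJA.collinear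
    have hAmem : A ∈ line[ℝ, B, A₁] :=
      hc.mem_affineSpan_of_mem_of_ne (by simp) (by simp) (by simp) hA₁B.symm
    exact hAnot (pair_le (left_mem_affineSpan_pair ℝ B C) hA₁.wbtw.mem_affineSpan hAmem)
  -- J is equidistant from A and B
  have hoJA : ∡ J A B = ∡ A₁ A B := hWJA.oangle_eq_left hJA'
  have hoJB : ∡ J B A = ∡ B₁ B A := hWJB.oangle_eq_left hJB'
  have e1 : ∠ J A B = ∠ A₁ A B := by
    rw [angle_eq_abs_oangle_toReal hJA' hBA, angle_eq_abs_oangle_toReal hA₁A hBA, hoJA]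
  have e2 : ∠ J B A = ∠ B₁ B A := by
    rw [angle_eq_abs_oangle_toReal hJB' hAB, angle_eq_abs_oangle_toReal hB₁B hAB, hoJB]
  have hJchain : ∠ J A B = ∠ J B A := by
    rw [e1, e2, angle_comm A₁ A B, angle_comm B₁ B A, hhalf]
  have hne_pi : ∠ A J B ≠ π := by
    intro hpi
    have hS : Sbtw ℝ A J B := angle_eq_pi_iff_sbtw.1 hpi
    have hcJB : Collinear ℝ ({A, J, B} : Set (EuclideanSpace ℝ (Fin 2))) := hS.wbtw.collinear
    have hBmem : B ∈ line[ℝ, A, J] :=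
      hcJB.mem_affineSpan_of_mem_of_ne (by simp) (by simp) (by simp) hJA'.symm
    have hA₁mem : A₁ ∈ line[ℝ, A, J] :=
      hWJA.collinear.mem_affineSpan_of_mem_of_ne (by simp) (by simp) (by simp) hJA'.symm
    have hCmem : C ∈ line[ℝ, A, J] := pair_le hBmem hA₁mem
      (hA₁.wbtw.collinear.mem_affineSpan_of_mem_of_ne (by simp) (by simp) (by simp) hA₁B.symm)
    exact hABC (collinear_triple_of_mem_affineSpan_pair (left_mem_affineSpan_pair ℝ A J)
      hBmem hCmem)
  have hJdist : dist J A = dist J B :=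
    dist_eq_of_angle_eq_angle_of_angle_ne_pi hJchain hne_pi
  -- the reflection in the perpendicular bisector of A and B
  haveI : Nonempty (perpBisector A B) := ⟨⟨_, midpoint_mem_perpBisector A B⟩⟩
  set σ := EuclideanGeometry.reflection (perpBisector A B) with hσ
  have hrA : σ A = B := reflection_perpBisector_left A B
  have hrB : σ B = A := by
    have h2 := EuclideanGeometry.reflection_reflection (perpBisector A B) A
    rw [← hσ] at h2
    rw [← hrA]
    exact h2.symm ▸ rfl
  have hrC : σ C = C :=
    (EuclideanGeometry.reflection_eq_self_iff C).2 (mem_perpBisector_iff_dist_eq'.2 h)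
  have hrJ : σ J = J :=
    (EuclideanGeometry.reflection_eq_self_iff J).2 (mem_perpBisector_iff_dist_eq.2 hJdist)
  set X := σ A₁ with hXdef
  have hXbtw : Sbtw ℝ A X C := by
    have hm := (AffineEquiv.sbtw_map_iff σ.toAffineEquiv).2 hA₁
    simp only [AffineIsometryEquiv.coe_toAffineEquiv] at hm
    rwa [hrB, hrC] at hm
  have hang1 : ∠ A B X = ∠ B A A₁ := by
    have := σ.toAffineIsometry.angle_map B A A₁
    simp only [AffineIsometryEquiv.coe_toAffineIsometry] at this
    rwa [hrA, hrB] at this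
  have hang2 : ∠ X B C = ∠ A₁ A C := by
    have := σ.toAffineIsometry.angle_map A₁ A C
    simp only [AffineIsometryEquiv.coe_toAffineIsometry] at this
    rwa [hrA, hrC] at this
  have hXangle : ∠ A B X = ∠ X B C := hang1.trans (hA₁'.trans hang2.symm)
  obtain ⟨h2X, hsgX⟩ := half_oangle hABC' hXbtw hXangle
  have hXB : X ≠ B := by
    intro hh
    apply hABC
    have := hXbtw.wbtw.collinear
    rwa [hh] at this
  have hu : ∡ A B X = ∡ A B B₁ := by
    rcases Real.Angle.two_nsmul_eq_iff.1 (h2X.trans h2B.symm) with h' | h'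
    · exact h'
    · exfalso
      have hsgn2 : (∡ A B X).sign = -(∡ A B B₁).sign := by
        rw [h', Real.Angle.sign_add_pi]
      rw [hsgX, hsgB] at hsgn2
      rcases hsc : (∡ A B C).sign with _ | _ | _ <;> rw [hsc] at hsgn2 <;> simp_all
  have hzero : ∡ B₁ B X = 0 := by
    have hsub : ∡ A B B₁ + ∡ B₁ B X = ∡ A B X := oangle_add hAB hB₁B hXB
    rw [hu] at hsub
    exact add_eq_left.1 hsub
  have hcolX : Collinear ℝ ({B₁, B, X} : Set (EuclideanSpace ℝ (Fin 2))) :=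
    oangle_eq_zero_or_eq_pi_iff_collinear.1 (Or.inl hzero)
  have hXeqB₁ : X = B₁ := by
    by_contra hne
    have hBmem : B ∈ line[ℝ, B₁, X] :=
      hcolX.mem_affineSpan_of_mem_of_ne (by simp) (by simp) (by simp) (Ne.symm hne)
    exact hBnot
      (pair_le hB₁.wbtw.mem_affineSpan hXbtw.wbtw.mem_affineSpan hBmem)
  calc dist J A₁ = dist (σ J) (σ A₁) := (σ.dist_map J A₁).symm
    _ = dist J B₁ := by rw [hrJ, ← hXdef, hXeqB₁]
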